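/- The sequence (Δ₀(n))_{n≥0} is 2-regular, the sequence (Δ₀(n) mod 2)_{n≥0} is 2-automatic, and the sequence (m₀(n) mod 2)_{n≥0} is 2-automatic. -/
import Mathlib


/-- The 2-kernel of a sequence `s : ℕ → ℤ`. -/
def kernel2 (s : ℕ → ℤ) : Set (ℕ → ℤ) :=
  {t | ∃ i j : ℕ, j < 2 ^ i ∧ t = fun n => s (2 ^ i * n + j)}

/-- A sequence is 2-regular if the ℤ-module spanned by its 2-kernel is finitely generated. -/
def IsTwoRegular (s : ℕ → ℤ) : Prop :=
  (Submodule.span ℤ (kernel2 s)).FG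

/-- A sequence is 2-automatic if its 2-kernel is finite. -/
def IsTwoAutomatic (s : ℕ → ℤ) : Prop :=
  (kernel2 s).Finite

/-- The period-doubling word, fixed point (starting with 0) of 0 ↦ 01, 1 ↦ 00:
its `n`-th letter is the parity of the 2-adic valuation of `n+1`. -/
def pd (n : ℕ) : ℕ := (n + 1).factorization 2 % 2

/-- The Thue–Morse word, fixed point (starting with 0) of 0 ↦ 01, 1 ↦ 10:
its `n`-th letter is the parity of the binary digit sum of `n`. -/
def tm (n : ℕ) : ℕ := (Nat.digits 2 n).sum % 2

/-- The 2-block coding `x = block(p, 2)` of the period-doubling word. -/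
def xw (n : ℕ) : ℕ := 2 * pd n + pd (n + 1)

/-- The 2-block coding `y = block(t, 2)` of the Thue–Morse word. -/
def yw (n : ℕ) : ℕ := 2 * tm n + tm (n + 1)

/-- The factor of an infinite word `w` of length `len` occurring at position `i`. -/
def factorAt (w : ℕ → ℕ) (i len : ℕ) : List ℕ :=
  (List.range len).map fun k => w (i + k)

/-- `u` is a factor of the infinite word `w`. -/
def IsFactor (w : ℕ → ℕ) (u : List ℕ) : Prop :=
  ∃ i, u = factorAt w i u.length

/-- Maximal number of 0's in a factor of `x` of length `n`. -/
noncomputable def M0 (n : ℕ) : ℕ := sSup {k | ∃ i, (factorAt xw i n).count 0 = k}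

/-- Minimal number of 0's in a factor of `x` of length `n`. -/
noncomputable def m0 (n : ℕ) : ℕ := sInf {k | ∃ i, (factorAt xw i n).count 0 = k}

noncomputable def D0 (n : ℕ) : ℕ := M0 n - m0 n

/-- Maximal number of 2's in a factor of `x` of length `n`. -/
noncomputable def M2c (n : ℕ) : ℕ := sSup {k | ∃ i, (factorAt xw i n).count 2 = k}

/-- Minimal number of 2's in a factor of `x` of length `n`. -/
noncomputable def m2c (n : ℕ) : ℕ := sInf {k | ∃ i, (factorAt xw i n).count 2 = k}

/-- The max-jump function for `M0`. -/
noncomputable def JM0 : ℕ → ℕ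
  | 0 => 0
  | n + 1 => if M0 n < M0 (n + 1) then 1 else 0

/-- The min-jump function for `m0`. -/
noncomputable def jm0 (n : ℕ) : ℕ := if m0 n < m0 (n + 1) then 1 else 0

/-- Maximal total number of 1's and 2's in a factor of `y` of length `n`. -/
noncomputable def M12 (n : ℕ) : ℕ :=
  sSup {k | ∃ i, (factorAt yw i n).count 1 + (factorAt yw i n).count 2 = k}

/-- Minimal total number of 1's and 2's in a factor of `y` of length `n`. -/
noncomputable def m12 (n : ℕ) : ℕ :=
  sInf {k | ∃ i, (factorAt yw i n).count 1 + (factorAt yw i n).count 2 = k}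

noncomputable def D12 (n : ℕ) : ℕ := M12 n - m12 n

/-- Maximal total number of 0's and 3's in a factor of `y` of length `n`. -/
noncomputable def M03 (n : ℕ) : ℕ :=
  sSup {k | ∃ i, (factorAt yw i n).count 0 + (factorAt yw i n).count 3 = k}

/-- Minimal total number of 0's and 3's in a factor of `y` of length `n`. -/
noncomputable def m03 (n : ℕ) : ℕ :=
  sInf {k | ∃ i, (factorAt yw i n).count 0 + (factorAt yw i n).count 3 = k}

/-- The max-jump function for `M03`. -/
noncomputable def JM03 (n : ℕ) : ℕ := if M03 (n - 1) < M03 n then 1 else 0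

/-- The min-jump function for `m03`. -/
noncomputable def jm03 (n : ℕ) : ℕ := if m03 n < m03 (n + 1) then 1 else 0

/-- Abelian complexity: the number of abelian equivalence classes (i.e. distinct
multisets of letters) of factors of `w` of length `n`. -/
noncomputable def abComplexity (w : ℕ → ℕ) (n : ℕ) : ℕ :=
  Set.ncard {m : Multiset ℕ | ∃ i, (↑(factorAt w i n) : Multiset ℕ) = m}

/-- The number of occurrences of `v` as a factor of `u`. -/
def countFactor (u v : List ℕ) : ℕ :=
  ((List.range (u.length + 1 - v.length)).filter
    fun i => decide ((u.drop i).take v.length = v)).length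

/-- 2-abelian complexity: the number of 2-abelian equivalence classes of factors of `w`
of length `n`, where two words are 2-abelian equivalent when every word of length at most 2
occurs equally often in both. -/
noncomputable def abel2Complexity (w : ℕ → ℕ) (n : ℕ) : ℕ :=
  Set.ncard {f : List ℕ → ℕ |
    ∃ i, f = fun v => if v.length ≤ 2 then countFactor (factorAt w i n) v else 0}

/-- The morphism φ : 0 ↦ 12, 1 ↦ 12, 2 ↦ 00. -/
def phiL : ℕ → List ℕ
  | 0 => [1, 2]
  | 1 => [1, 2]
  | 2 => [0, 0]
  | _ => []

/-- The morphism τ : 0 ↦ 0, 1 ↦ 2, 2 ↦ 1. -/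
def tauL : ℕ → ℕ
  | 1 => 2
  | 2 => 1
  | n => n



noncomputable section AuxStmt6

lemma pd_le_one (n : ℕ) : pd n ≤ 1 := Nat.le_of_lt_succ (Nat.mod_lt _ (by norm_num))

lemma pd_even (k : ℕ) : pd (2 * k) = 0 := by
  unfold pd
  rw [Nat.factorization_eq_zero_of_not_dvd (by omega)]

lemma pd_odd (k : ℕ) : pd (2 * k + 1) = 1 - pd k := by
  unfold pd
  have h : 2 * k + 1 + 1 = 2 * (k + 1) := by ring
  rw [h, Nat.factorization_mul (by norm_num) (by omega)]
  rw [Finsupp.add_apply, Nat.Prime.factorization_self (by norm_num : Nat.Prime 2)]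
  omega

lemma pd_succ_of_one (k : ℕ) (h : pd k = 1) : pd (k + 1) = 0 := by
  rcases Nat.even_or_odd k with ⟨m, hm⟩ | ⟨m, hm⟩
  · rw [show k = 2 * m by omega, pd_even] at h; omega
  · rw [show k + 1 = 2 * (m + 1) by omega, pd_even]

def zi (k : ℕ) : ℕ := if xw k = 0 then 1 else 0

lemma zi_eq (k : ℕ) : zi (2 * k) = pd k ∧ zi (2 * k + 1) = pd k := by
  have h1 := pd_le_one k
  have h2 : pd (2 * k) = 0 := pd_even k
  have h3 : pd (2 * k + 1) = 1 - pd k := pd_odd k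
  have h4 : pd (2 * k + 2) = 0 := by rw [show 2*k+2 = 2*(k+1) by ring, pd_even]
  constructor <;> simp only [zi, xw, h2, h3, h4] <;> split <;> omega

lemma zi_even (k : ℕ) : zi (2 * k) = pd k := (zi_eq k).1
lemma zi_odd (k : ℕ) : zi (2 * k + 1) = pd k := (zi_eq k).2

lemma ti_eq (k : ℕ) : (if xw k = 2 then 1 else 0) = pd k := by
  have h1 := pd_le_one k
  rcases Nat.lt_or_ge (pd k) 1 with h | h
  · have : pd k = 0 := by omega
    simp only [xw, this]
    have := pd_le_one (k+1); split <;> omega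
  · have hk : pd k = 1 := by omega
    have := pd_succ_of_one k hk
    simp [xw, hk, this]

def Zc (i n : ℕ) : ℕ := ∑ k ∈ Finset.range n, zi (i + k)
def Ac (i n : ℕ) : ℕ := ∑ k ∈ Finset.range n, pd (i + k)

lemma Zc_succ' (i n : ℕ) : Zc i (n + 1) = Zc i n + zi (i + n) := Finset.sum_range_succ _ _
lemma Ac_succ' (i n : ℕ) : Ac i (n + 1) = Ac i n + pd (i + n) := Finset.sum_range_succ _ _

lemma count0_eq (i n : ℕ) : (factorAt xw i n).count 0 = Zc i n := by
  induction n with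
  | zero => simp [factorAt, Zc]
  | succ n ih =>
    rw [show factorAt xw i (n+1) = factorAt xw i n ++ [xw (i+n)] by
          simp [factorAt, List.range_succ]]
    rw [List.count_append, ih, Zc_succ']
    simp [zi, List.count_singleton]

lemma count2_eq (i n : ℕ) : (factorAt xw i n).count 2 = Ac i n := by
  induction n with
  | zero => simp [factorAt, Ac]
  | succ n ih =>
    rw [show factorAt xw i (n+1) = factorAt xw i n ++ [xw (i+n)] by
          simp [factorAt, List.range_succ]]
    rw [List.count_append, ih, Ac_succ', ← ti_eq]
    simp [List.count_singleton]

lemma Ac_succ (i n : ℕ) : Ac i (n + 1) = Ac i n + pd (i + n) := Finset.sum_range_succ _ _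
lemma Zc_succ (i n : ℕ) : Zc i (n + 1) = Zc i n + zi (i + n) := Finset.sum_range_succ _ _

lemma Ac_le (i n : ℕ) : Ac i n ≤ n := by
  calc Ac i n ≤ ∑ _k ∈ Finset.range n, 1 := Finset.sum_le_sum (fun k _ => pd_le_one _)
  _ = n := by simp

lemma Z1 (i n : ℕ) : Zc (2*i) (2*n) = 2 * Ac i n := by
  induction n with
  | zero => simp [Zc, Ac]
  | succ n ih =>
    rw [show 2*(n+1) = (2*n+1)+1 by ring, Zc_succ, Zc_succ, ih, Ac_succ]
    rw [show 2*i+(2*n+1) = 2*(i+n)+1 by ring, show 2*i+2*n = 2*(i+n) by ring,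
        zi_even, zi_odd]
    ring

lemma Z2 (i n : ℕ) : Zc (2*i+1) (2*n) = Ac i n + Ac (i+1) n := by
  induction n with
  | zero => simp [Zc, Ac]
  | succ n ih =>
    rw [show 2*(n+1) = (2*n+1)+1 by ring, Zc_succ, Zc_succ, ih, Ac_succ, Ac_succ]
    rw [show 2*i+1+(2*n+1) = 2*(i+n+1) by ring, show 2*i+1+2*n = 2*(i+n)+1 by ring,
        zi_even, zi_odd, show i+1+n = i+n+1 by ring]
    omega

lemma Z3 (i n : ℕ) : Zc (2*i) (2*n+1) = Ac i n + Ac i (n+1) := by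
  rw [Zc_succ, Z1, Ac_succ, show 2*i+2*n = 2*(i+n) by ring, zi_even]; ring

lemma Z4 (i n : ℕ) : Zc (2*i+1) (2*n+1) = Ac i (n+1) + Ac (i+1) n := by
  rw [Zc_succ, Z2, Ac_succ, show 2*i+1+2*n = 2*(i+n)+1 by ring, zi_odd]; ring

lemma A1 (i n : ℕ) : Ac (2*i) (2*n) + Ac i n = n := by
  induction n with
  | zero => simp [Ac]
  | succ n ih =>
    rw [show 2*(n+1) = (2*n+1)+1 by ring, Ac_succ, Ac_succ, Ac_succ]
    rw [show 2*i+(2*n+1) = 2*(i+n)+1 by ring, show 2*i+2*n = 2*(i+n) by ring,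
        pd_even, pd_odd]
    have := pd_le_one (i+n)
    omega

lemma A2 (i n : ℕ) : Ac (2*i+1) (2*n) + Ac i n = n := by
  induction n with
  | zero => simp [Ac]
  | succ n ih =>
    rw [show 2*(n+1) = (2*n+1)+1 by ring, Ac_succ, Ac_succ, Ac_succ]
    rw [show 2*i+1+(2*n+1) = 2*(i+n+1) by ring, show 2*i+1+2*n = 2*(i+n)+1 by ring,
        pd_even, pd_odd]
    have := pd_le_one (i+n)
    omega

lemma A3 (i n : ℕ) : Ac (2*i) (2*n+1) + Ac i n = n := by
  rw [Ac_succ, show 2*i+2*n = 2*(i+n) by ring, pd_even]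
  have := A1 i n; omega

lemma A4 (i n : ℕ) : Ac (2*i+1) (2*n+1) + Ac i (n+1) = n + 1 := by
  rw [Ac_succ, Ac_succ, show 2*i+1+2*n = 2*(i+n)+1 by ring, pd_odd]
  have := A2 i n; have := pd_le_one (i+n); omega


lemma zi_le_one (k : ℕ) : zi k ≤ 1 := by unfold zi; split <;> omega

lemma Zc_le (i n : ℕ) : Zc i n ≤ n := by
  calc Zc i n ≤ ∑ _k ∈ Finset.range n, 1 := Finset.sum_le_sum (fun k _ => zi_le_one _)
  _ = n := by simp

lemma set0_eq (n : ℕ) : {k | ∃ i, (factorAt xw i n).count 0 = k} = {k | ∃ i, Zc i n = k} := by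
  simp only [count0_eq]

lemma set2_eq (n : ℕ) : {k | ∃ i, (factorAt xw i n).count 2 = k} = {k | ∃ i, Ac i n = k} := by
  simp only [count2_eq]

lemma bddZ (n : ℕ) : BddAbove {k | ∃ i, Zc i n = k} :=
  ⟨n, fun k ⟨i, h⟩ => h ▸ Zc_le i n⟩
lemma bddA (n : ℕ) : BddAbove {k | ∃ i, Ac i n = k} :=
  ⟨n, fun k ⟨i, h⟩ => h ▸ Ac_le i n⟩

lemma M0_spec (n i : ℕ) : Zc i n ≤ M0 n := by
  rw [M0, set0_eq]; exact le_csSup (bddZ n) ⟨i, rfl⟩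
lemma M0_exists (n : ℕ) : ∃ i, Zc i n = M0 n := by
  rw [M0, set0_eq]
  have hne : {k | ∃ i, Zc i n = k}.Nonempty := ⟨Zc 0 n, 0, rfl⟩
  exact Nat.sSup_mem hne (bddZ n)
lemma m0_spec (n i : ℕ) : m0 n ≤ Zc i n := by
  rw [m0, set0_eq]; exact Nat.sInf_le ⟨i, rfl⟩
lemma m0_exists (n : ℕ) : ∃ i, Zc i n = m0 n := by
  rw [m0, set0_eq]
  have hne : {k | ∃ i, Zc i n = k}.Nonempty := ⟨Zc 0 n, 0, rfl⟩
  exact Nat.sInf_mem hne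

lemma M2c_spec (n i : ℕ) : Ac i n ≤ M2c n := by
  rw [M2c, set2_eq]; exact le_csSup (bddA n) ⟨i, rfl⟩
lemma M2c_exists (n : ℕ) : ∃ i, Ac i n = M2c n := by
  rw [M2c, set2_eq]
  have hne : {k | ∃ i, Ac i n = k}.Nonempty := ⟨Ac 0 n, 0, rfl⟩
  exact Nat.sSup_mem hne (bddA n)
lemma m2c_spec (n i : ℕ) : m2c n ≤ Ac i n := by
  rw [m2c, set2_eq]; exact Nat.sInf_le ⟨i, rfl⟩
lemma m2c_exists (n : ℕ) : ∃ i, Ac i n = m2c n := by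
  rw [m2c, set2_eq]
  have hne : {k | ∃ i, Ac i n = k}.Nonempty := ⟨Ac 0 n, 0, rfl⟩
  exact Nat.sInf_mem hne

lemma m0_le_M0 (n : ℕ) : m0 n ≤ M0 n := le_trans (m0_spec n 0) (M0_spec n 0)
lemma m2c_le_M2c (n : ℕ) : m2c n ≤ M2c n := le_trans (m2c_spec n 0) (M2c_spec n 0)

lemma M2c_mono (n : ℕ) : M2c n ≤ M2c (n+1) := by
  obtain ⟨i, hi⟩ := M2c_exists n
  have h := M2c_spec (n+1) i
  rw [Ac_succ] at h; omega
lemma M2c_succ_le (n : ℕ) : M2c (n+1) ≤ M2c n + 1 := by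
  obtain ⟨i, hi⟩ := M2c_exists (n+1)
  have h := M2c_spec n i
  have h2 := pd_le_one (i + n)
  rw [Ac_succ] at hi; omega
lemma m2c_mono (n : ℕ) : m2c n ≤ m2c (n+1) := by
  obtain ⟨i, hi⟩ := m2c_exists (n+1)
  have h := m2c_spec n i
  rw [Ac_succ] at hi; omega
lemma m2c_succ_le (n : ℕ) : m2c (n+1) ≤ m2c n + 1 := by
  obtain ⟨i, hi⟩ := m2c_exists n
  have h := m2c_spec (n+1) i
  have h2 := pd_le_one (i + n)
  rw [Ac_succ] at h; omega

lemma even_odd (i : ℕ) : (∃ j, i = 2*j) ∨ (∃ j, i = 2*j+1) := by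
  rcases Nat.even_or_odd i with ⟨j, h⟩ | ⟨j, h⟩
  · exact Or.inl ⟨j, by omega⟩
  · exact Or.inr ⟨j, by omega⟩

lemma R1 (n : ℕ) : M2c (2*n) + m2c n = n := by
  obtain ⟨i, hi⟩ := M2c_exists (2*n)
  obtain ⟨j0, hj0⟩ := m2c_exists n
  have hb := M2c_spec (2*n) (2*j0)
  have hA0 := A1 j0 n
  rcases even_odd i with ⟨j, rfl⟩ | ⟨j, rfl⟩
  · have := A1 j n; have := m2c_spec n j; omega
  · have := A2 j n; have := m2c_spec n j; omega

lemma R2 (n : ℕ) : m2c (2*n) + M2c n = n := by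
  obtain ⟨i, hi⟩ := m2c_exists (2*n)
  obtain ⟨j0, hj0⟩ := M2c_exists n
  have hb := m2c_spec (2*n) (2*j0)
  have hA0 := A1 j0 n
  rcases even_odd i with ⟨j, rfl⟩ | ⟨j, rfl⟩
  · have := A1 j n; have := M2c_spec n j; omega
  · have := A2 j n; have := M2c_spec n j; omega

lemma R3 (n : ℕ) : M2c (2*n+1) + m2c (n+1) = n + 1 := by
  obtain ⟨i, hi⟩ := M2c_exists (2*n+1)
  obtain ⟨j0, hj0⟩ := m2c_exists (n+1)
  have hb := M2c_spec (2*n+1) (2*j0+1)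
  have hA0 := A4 j0 n
  have hms := m2c_succ_le n
  rcases even_odd i with ⟨j, rfl⟩ | ⟨j, rfl⟩
  · have := A3 j n; have := m2c_spec n j; omega
  · have := A4 j n; have := m2c_spec (n+1) j; omega

lemma R4 (n : ℕ) : m2c (2*n+1) + M2c n = n := by
  obtain ⟨i, hi⟩ := m2c_exists (2*n+1)
  obtain ⟨j0, hj0⟩ := M2c_exists n
  have hb := m2c_spec (2*n+1) (2*j0)
  have hA0 := A3 j0 n
  have hms := M2c_succ_le n
  rcases even_odd i with ⟨j, rfl⟩ | ⟨j, rfl⟩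
  · have := A3 j n; have := M2c_spec n j; omega
  · have := A4 j n; have := M2c_spec (n+1) j; omega

lemma R5 (n : ℕ) : M0 (2*n) = 2 * M2c n := by
  obtain ⟨i, hi⟩ := M0_exists (2*n)
  obtain ⟨j0, hj0⟩ := M2c_exists n
  have hb := M0_spec (2*n) (2*j0)
  have hZ0 := Z1 j0 n
  rcases even_odd i with ⟨j, rfl⟩ | ⟨j, rfl⟩
  · have := Z1 j n; have := M2c_spec n j; omega
  · have := Z2 j n; have := M2c_spec n j; have := M2c_spec n (j+1); omega

lemma R6 (n : ℕ) : m0 (2*n) = 2 * m2c n := by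
  obtain ⟨i, hi⟩ := m0_exists (2*n)
  obtain ⟨j0, hj0⟩ := m2c_exists n
  have hb := m0_spec (2*n) (2*j0)
  have hZ0 := Z1 j0 n
  rcases even_odd i with ⟨j, rfl⟩ | ⟨j, rfl⟩
  · have := Z1 j n; have := m2c_spec n j; omega
  · have := Z2 j n; have := m2c_spec n j; have := m2c_spec n (j+1); omega

lemma R7 (n : ℕ) : M0 (2*n+1) = M2c n + M2c (n+1) := by
  have hub : M0 (2*n+1) ≤ M2c n + M2c (n+1) := by
    obtain ⟨i, hi⟩ := M0_exists (2*n+1)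
    rcases even_odd i with ⟨j, rfl⟩ | ⟨j, rfl⟩
    · have := Z3 j n; have := M2c_spec n j; have := M2c_spec (n+1) j; omega
    · have := Z4 j n; have := M2c_spec (n+1) j; have := M2c_spec n (j+1); omega
  have hlb : M2c n + M2c (n+1) ≤ M0 (2*n+1) := by
    obtain ⟨i1, h1⟩ := M2c_exists n
    by_cases hc : Ac i1 (n+1) = M2c (n+1)
    · have := M0_spec (2*n+1) (2*i1)
      have := Z3 i1 n
      omega
    · obtain ⟨j, hj⟩ := M2c_exists (n+1)
      have hs1 := M2c_spec (n+1) i1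
      have hm1 : Ac i1 n ≤ Ac i1 (n+1) := by rw [Ac_succ]; omega
      have hjn := M2c_spec n j
      have hjs : Ac j (n+1) ≤ Ac j n + 1 := by rw [Ac_succ]; have := pd_le_one (j+n); omega
      have := M0_spec (2*n+1) (2*j)
      have := Z3 j n
      omega
  omega

lemma R8 (n : ℕ) : m0 (2*n+1) = m2c n + m2c (n+1) := by
  have hlb : m2c n + m2c (n+1) ≤ m0 (2*n+1) := by
    obtain ⟨i, hi⟩ := m0_exists (2*n+1)
    rcases even_odd i with ⟨j, rfl⟩ | ⟨j, rfl⟩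
    · have := Z3 j n; have := m2c_spec n j; have := m2c_spec (n+1) j; omega
    · have := Z4 j n; have := m2c_spec (n+1) j; have := m2c_spec n (j+1); omega
  have hub : m0 (2*n+1) ≤ m2c n + m2c (n+1) := by
    obtain ⟨i1, h1⟩ := m2c_exists n
    by_cases hc : Ac i1 (n+1) = m2c (n+1)
    · have := m0_spec (2*n+1) (2*i1)
      have := Z3 i1 n
      omega
    · obtain ⟨j, hj⟩ := m2c_exists (n+1)
      have hs1 := m2c_spec (n+1) i1
      have hi1s : Ac i1 (n+1) ≤ Ac i1 n + 1 := by rw [Ac_succ]; have := pd_le_one (i1+n); omega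
      have hjn := m2c_spec n j
      have hjm : Ac j n ≤ Ac j (n+1) := by rw [Ac_succ]; omega
      have hmono := m2c_mono n
      have := m0_spec (2*n+1) (2*j)
      have := Z3 j n
      omega
  omega


lemma kernel2_subset {s : ℕ → ℤ} {C : Set (ℕ → ℤ)} (hs : s ∈ C)
    (h0 : ∀ f ∈ C, (fun n => f (2*n)) ∈ C)
    (h1 : ∀ f ∈ C, (fun n => f (2*n+1)) ∈ C) :
    kernel2 s ⊆ C := by
  have key : ∀ i : ℕ, ∀ f ∈ C, ∀ j < 2^i, (fun n => f (2^i * n + j)) ∈ C := by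
    intro i
    induction i with
    | zero =>
      intro f hf j hj
      have hj0 : j = 0 := by omega
      subst hj0
      have : (fun n => f (2^0 * n + 0)) = f := by funext n; simp
      rw [this]; exact hf
    | succ i ih =>
      intro f hf j hj
      have hpow : (2:ℕ)^(i+1) = 2 * 2^i := by ring
      rcases even_odd j with ⟨q, rfl⟩ | ⟨q, rfl⟩
      · have hq : q < 2^i := by omega
        have hmem := ih _ (h0 f hf) q hq
        have heq : (fun n => f (2^(i+1) * n + 2*q)) =
            (fun n => (fun m => f (2*m)) (2^i * n + q)) := by
          funext n; congr 1; rw [hpow]; ring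
        rw [heq]; exact hmem
      · have hq : q < 2^i := by omega
        have hmem := ih _ (h1 f hf) q hq
        have heq : (fun n => f (2^(i+1) * n + (2*q+1))) =
            (fun n => (fun m => f (2*m+1)) (2^i * n + q)) := by
          funext n; congr 1; rw [hpow]; ring
        rw [heq]; exact hmem
  rintro t ⟨i, j, hj, rfl⟩
  exact key i s hs j hj

-- Part 1 : regularity
def D0z : ℕ → ℤ := fun n => (D0 n : ℤ)
def S2 : ℕ → ℤ := fun n => (M2c n : ℤ) - m2c n
def S2' : ℕ → ℤ := fun n => S2 (n+1)
def ee : ℕ → ℤ := fun n => (m2c (n+1) : ℤ) - m2c n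
def EE : ℕ → ℤ := fun n => (M2c (n+1) : ℤ) - M2c n
def one1 : ℕ → ℤ := fun _ => 1

lemma D0z_eq (n : ℕ) : D0z n = (M0 n : ℤ) - m0 n := by
  unfold D0z D0
  have := m0_le_M0 n
  push_cast [this]
  ring

def Gset : Set (ℕ → ℤ) := {D0z, S2, S2', ee, EE, one1}
def P : Submodule ℤ (ℕ → ℤ) := Submodule.span ℤ Gset

lemma S2_mem : S2 ∈ P := Submodule.subset_span (by simp [Gset])
lemma S2'_mem : S2' ∈ P := Submodule.subset_span (by simp [Gset])
lemma ee_mem : ee ∈ P := Submodule.subset_span (by simp [Gset])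
lemma EE_mem : EE ∈ P := Submodule.subset_span (by simp [Gset])
lemma one1_mem : one1 ∈ P := Submodule.subset_span (by simp [Gset])
lemma D0z_mem : D0z ∈ P := Submodule.subset_span (by simp [Gset])

lemma P_closed0 : ∀ f ∈ P, (fun n => f (2*n)) ∈ P := by
  have : P ≤ P.comap (LinearMap.funLeft ℤ ℤ (fun n => 2*n)) := by
    rw [P, Submodule.span_le]
    rintro g (rfl | rfl | rfl | rfl | rfl | rfl)
    · -- D0z
      show (fun n => D0z (2*n)) ∈ P
      have : (fun n => D0z (2*n)) = (2:ℤ) • S2 := by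
        funext n
        have h5 := R5 n; have h6 := R6 n
        rw [D0z_eq]; simp only [S2, Pi.smul_apply, smul_eq_mul]; omega
      rw [this]; exact Submodule.smul_mem _ _ S2_mem
    · -- S2
      show (fun n => S2 (2*n)) ∈ P
      have : (fun n => S2 (2*n)) = S2 := by
        funext n
        have h1 := R1 n; have h2 := R2 n
        simp only [S2]; omega
      rw [this]; exact S2_mem
    · -- S2'
      show (fun n => S2' (2*n)) ∈ P
      have : (fun n => S2' (2*n)) = one1 + S2 - ee := by
        funext n
        have h3 := R3 n; have h4 := R4 n
        simp only [S2', S2, ee, one1, Pi.add_apply, Pi.sub_apply]; omega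
      rw [this]; exact sub_mem (add_mem one1_mem S2_mem) ee_mem
    · -- ee
      show (fun n => ee (2*n)) ∈ P
      have : (fun n => ee (2*n)) = (0 : ℕ → ℤ) := by
        funext n
        have h2 := R2 n; have h4 := R4 n
        simp only [ee, Pi.zero_apply]; omega
      rw [this]; exact Submodule.zero_mem P
    · -- EE
      show (fun n => EE (2*n)) ∈ P
      have : (fun n => EE (2*n)) = one1 - ee := by
        funext n
        have h1 := R1 n; have h3 := R3 n
        simp only [EE, ee, one1, Pi.sub_apply]; omega
      rw [this]; exact sub_mem one1_mem ee_mem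
    · -- one1
      show (fun n => one1 (2*n)) ∈ P
      exact one1_mem
  intro f hf
  exact this hf

lemma P_closed1 : ∀ f ∈ P, (fun n => f (2*n+1)) ∈ P := by
  have : P ≤ P.comap (LinearMap.funLeft ℤ ℤ (fun n => 2*n+1)) := by
    rw [P, Submodule.span_le]
    rintro g (rfl | rfl | rfl | rfl | rfl | rfl)
    · -- D0z
      show (fun n => D0z (2*n+1)) ∈ P
      have : (fun n => D0z (2*n+1)) = S2 + S2' := by
        funext n
        have h7 := R7 n; have h8 := R8 n
        have := m2c_le_M2c n; have := m2c_le_M2c (n+1)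
        rw [D0z_eq]; simp only [S2, S2', Pi.add_apply]; omega
      rw [this]; exact add_mem S2_mem S2'_mem
    · -- S2
      show (fun n => S2 (2*n+1)) ∈ P
      have : (fun n => S2 (2*n+1)) = one1 + S2 - ee := by
        funext n
        have h3 := R3 n; have h4 := R4 n
        simp only [S2, ee, one1, Pi.add_apply, Pi.sub_apply]; omega
      rw [this]; exact sub_mem (add_mem one1_mem S2_mem) ee_mem
    · -- S2'
      show (fun n => S2' (2*n+1)) ∈ P
      have : (fun n => S2' (2*n+1)) = S2' := by
        funext n
        have h1 := R1 (n+1); have h2 := R2 (n+1)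
        simp only [S2', S2]
        rw [show 2*n+1+1 = 2*(n+1) by ring]; omega
      rw [this]; exact S2'_mem
    · -- ee
      show (fun n => ee (2*n+1)) ∈ P
      have : (fun n => ee (2*n+1)) = one1 - EE := by
        funext n
        have h4 := R4 n; have h2 := R2 (n+1)
        simp only [ee, EE, one1, Pi.sub_apply]
        rw [show 2*n+1+1 = 2*(n+1) by ring]; omega
      rw [this]; exact sub_mem one1_mem EE_mem
    · -- EE
      show (fun n => EE (2*n+1)) ∈ P
      have : (fun n => EE (2*n+1)) = (0 : ℕ → ℤ) := by
        funext n
        have h3 := R3 n; have h1 := R1 (n+1)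
        simp only [EE, Pi.zero_apply]
        rw [show 2*n+1+1 = 2*(n+1) by ring]; omega
      rw [this]; exact Submodule.zero_mem P
    · show (fun n => one1 (2*n+1)) ∈ P
      exact one1_mem
  intro f hf
  exact this hf

theorem part1 : IsTwoRegular (fun n => (D0 n : ℤ)) := by
  have hker : kernel2 D0z ⊆ (P : Set (ℕ → ℤ)) :=
    kernel2_subset D0z_mem P_closed0 P_closed1
  have hle : Submodule.span ℤ (kernel2 D0z) ≤ P := Submodule.span_le.mpr hker
  have hPfg : P.FG := Submodule.fg_span (Set.Finite.insert _ (Set.Finite.insert _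
    (Set.Finite.insert _ (Set.Finite.insert _ (Set.Finite.insert _ (Set.finite_singleton _))))))
  haveI : IsNoetherian ℤ P := isNoetherian_of_fg_of_noetherian P hPfg
  have hQ : (Submodule.span ℤ (kernel2 D0z)).FG := by
    have h1 : ((Submodule.span ℤ (kernel2 D0z)).comap P.subtype).FG :=
      IsNoetherian.noetherian _
    have h2 := h1.map P.subtype
    rwa [Submodule.map_comap_subtype, inf_eq_right.mpr hle] at h2
  exact hQ


abbrev V5 := Fin 2 × Fin 2 × Fin 2 × Fin 2 × Fin 2

def b2 (k : ℕ) : Fin 2 := ⟨k % 2, Nat.mod_lt _ (by norm_num)⟩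

def wv (n : ℕ) : V5 := (b2 n, b2 (M2c n), b2 (M2c (n+1)), b2 (m2c n), b2 (m2c (n+1)))

def T0 : V5 → V5 := fun v => (0, v.1 + v.2.2.2.1, 1 + v.1 + v.2.2.2.2, v.1 + v.2.1, v.1 + v.2.1)
def T1 : V5 → V5 := fun v =>
  (1, 1 + v.1 + v.2.2.2.2, 1 + v.1 + v.2.2.2.2, v.1 + v.2.1, 1 + v.1 + v.2.2.1)

lemma b2_val (k : ℕ) : (b2 k).val = k % 2 := rfl

lemma fin2_ext {a b : Fin 2} (h : a.val = b.val) : a = b := Fin.ext h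

lemma wv_even (n : ℕ) : wv (2*n) = T0 (wv n) := by
  have h1 := R1 n; have h2 := R2 n; have h3 := R3 n; have h4 := R4 n
  refine Prod.ext ?_ (Prod.ext ?_ (Prod.ext ?_ (Prod.ext ?_ ?_))) <;>
    apply fin2_ext <;>
    simp only [wv, T0, Fin.val_add, b2_val, Fin.val_one, Fin.val_zero] <;>
    omega

lemma wv_odd (n : ℕ) : wv (2*n+1) = T1 (wv n) := by
  have h3 := R3 n; have h4 := R4 n
  have h1 := R1 (n+1); have h2 := R2 (n+1)
  have e1 : 2*n+1+1 = 2*(n+1) := by ring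
  refine Prod.ext ?_ (Prod.ext ?_ (Prod.ext ?_ (Prod.ext ?_ ?_))) <;>
    apply fin2_ext <;>
    simp only [wv, T1, e1, Fin.val_add, b2_val, Fin.val_one, Fin.val_zero] <;>
    omega

def chiF (χ : V5 → Fin 2) : ℕ → ℤ := fun n => ((χ (wv n) : Fin 2) : ℕ)

def F0 : Set (ℕ → ℤ) := Set.range chiF

lemma F0_finite : F0.Finite := Set.finite_range _

lemma chiF_even (χ : V5 → Fin 2) : (fun n => chiF χ (2*n)) = chiF (χ ∘ T0) := by
  funext n; simp only [chiF, Function.comp_apply, wv_even]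
lemma chiF_odd (χ : V5 → Fin 2) : (fun n => chiF χ (2*n+1)) = chiF (χ ∘ T1) := by
  funext n; simp only [chiF, Function.comp_apply, wv_odd]

-- the two target sequences
def dseq : ℕ → ℤ := fun n => ((D0 n % 2 : ℕ) : ℤ)
def museq : ℕ → ℤ := fun n => ((m0 n % 2 : ℕ) : ℤ)

-- boolean combinations used
def chi0 : V5 → Fin 2 := fun _ => 0
def chiD : V5 → Fin 2 := fun v => v.2.1 + v.2.2.1 + v.2.2.2.1 + v.2.2.2.2
def chiMu : V5 → Fin 2 := fun v => v.2.2.2.1 + v.2.2.2.2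

lemma dseq_even : (fun n => dseq (2*n)) = chiF chi0 := by
  funext n
  have h5 := R5 n; have h6 := R6 n; have h := m2c_le_M2c n
  have hD : D0 (2*n) = 2 * M2c n - 2 * m2c n := by unfold D0; omega
  simp only [dseq, chiF, chi0, hD]
  norm_num
  omega

lemma dseq_odd : (fun n => dseq (2*n+1)) = chiF chiD := by
  funext n
  have h7 := R7 n; have h8 := R8 n
  have ha := m2c_le_M2c n; have hb := m2c_le_M2c (n+1)
  have hD : D0 (2*n+1) = (M2c n + M2c (n+1)) - (m2c n + m2c (n+1)) := by unfold D0; omega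
  simp only [dseq, chiF, chiD, hD, wv, Fin.val_add, b2_val]
  norm_num
  omega

lemma museq_even : (fun n => museq (2*n)) = chiF chi0 := by
  funext n
  have h6 := R6 n
  simp only [museq, chiF, chi0, h6]
  norm_num

lemma museq_odd : (fun n => museq (2*n+1)) = chiF chiMu := by
  funext n
  have h8 := R8 n
  simp only [museq, chiF, chiMu, h8, wv, Fin.val_add, b2_val]
  norm_num

lemma automatic_of_closed (t : ℕ → ℤ)
    (h0 : (fun n => t (2*n)) ∈ F0) (h1 : (fun n => t (2*n+1)) ∈ F0) :
    IsTwoAutomatic t := by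
  set C : Set (ℕ → ℤ) := F0 ∪ {t} with hC
  have hfin : C.Finite := F0_finite.union (Set.finite_singleton _)
  apply hfin.subset
  apply kernel2_subset (s := t) (C := C) (Set.mem_union_right _ (Set.mem_singleton t))
  · rintro f (⟨χ, rfl⟩ | rfl)
    · exact Or.inl ⟨χ ∘ T0, (chiF_even χ).symm⟩
    · exact Or.inl h0
  · rintro f (⟨χ, rfl⟩ | rfl)
    · exact Or.inl ⟨χ ∘ T1, (chiF_odd χ).symm⟩
    · exact Or.inl h1

theorem part2 : IsTwoAutomatic (fun n => ((D0 n % 2 : ℕ) : ℤ)) :=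
  automatic_of_closed dseq (dseq_even ▸ ⟨chi0, rfl⟩) (dseq_odd ▸ ⟨chiD, rfl⟩)

theorem part3 : IsTwoAutomatic (fun n => ((m0 n % 2 : ℕ) : ℤ)) :=
  automatic_of_closed museq (museq_even ▸ ⟨chi0, rfl⟩) (museq_odd ▸ ⟨chiMu, rfl⟩)

end AuxStmt6

theorem stmt6 :
    IsTwoRegular (fun n => (D0 n : ℤ)) ∧
    IsTwoAutomatic (fun n => ((D0 n % 2 : ℕ) : ℤ)) ∧
    IsTwoAutomatic (fun n => ((m0 n % 2 : ℕ) : ℤ)) := by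
  exact ⟨part1, part2, part3⟩
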